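/- Fix 0 < q < 1. On ℓ²(ℕ × ℤ) with orthonormal basis ε_{i,j}, let α ε_{i,j} = (1 − q^{2i})^{1/2} ε_{i−1,j} (zero when i = 0), β ε_{i,j} = q^{i} ε_{i,j−1}, and let D be the (densely defined) self-adjoint operator D ε_{i,j} = (i·sign(j) + j) ε_{i,j}, where sign(j) := 1 for j ≥ 0 and sign(j) := −1 for j < 0. Then the commutators Dα − αD and Dβ − βD, defined on finitely supported vectors, extend to bounded operators; in fact ‖Dα − αD‖ ≤ 1 and ‖Dβ − βD‖ ≤ sup_{i∈ℕ}(2i + 1)q^{i} < ∞. -/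
import Mathlib

noncomputable section

/-- The Hilbert space `ℓ²(ℕ × ℤ)`. -/
abbrev HNZ : Type := lp (fun _ : ℕ × ℤ => ℂ) 2

/-- The standard orthonormal basis vector `ε_{i,j}` of `ℓ²(ℕ × ℤ)`. -/
noncomputable def eNZ (i : ℕ) (j : ℤ) : HNZ := lp.single 2 (i, j) 1

/-- `sign j`: `1` for `j ≥ 0`, `-1` for `j < 0`. -/
def signZ (j : ℤ) : ℝ := if 0 ≤ j then 1 else -1

/-- The eigenvalue `i·sign(j) + j` of the Dirac operator `D` at the basis vector `ε_{i,j}`. -/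
noncomputable def dNZ (i : ℕ) (j : ℤ) : ℝ := (i : ℝ) * signZ j + (j : ℝ)

namespace Suq2Aux

set_option linter.unusedSectionVars false

lemma sq_summable (x : HNZ) : Summable fun k : ℕ × ℤ => ‖x k‖ ^ 2 := by
  have := (lp.memℓp x).summable (p := 2) (by norm_num)
  simpa [Real.rpow_natCast] using this

lemma norm_sq_eq (x : HNZ) : ‖x‖ ^ 2 = ∑' k, ‖x k‖ ^ 2 := by
  have := lp.norm_rpow_eq_tsum (p := 2) (by norm_num) x
  simpa [Real.rpow_natCast] using this

variable {σ : ℕ × ℤ → ℕ × ℤ} (hσ : Function.Injective σ)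
  {c : ℕ × ℤ → ℂ} {K : ℝ} (hK0 : 0 ≤ K) (hK : ∀ k, ‖c k‖ ≤ K)

section
include hσ hK0 hK

lemma wc_summable (x : HNZ) :
    Summable fun k : ℕ × ℤ => ‖c k * x (σ k)‖ ^ 2 := by
  refine Summable.of_nonneg_of_le (fun k => by positivity) (fun k => ?_)
    (((sq_summable x).comp_injective hσ).mul_left (K ^ 2))
  simp only [Function.comp_apply]
  have h1 : ‖c k * x (σ k)‖ ^ 2 = ‖c k‖ ^ 2 * ‖x (σ k)‖ ^ 2 := by
    rw [norm_mul]; ring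
  rw [h1]
  have h2 : ‖c k‖ ^ 2 ≤ K ^ 2 := by
    have := hK k
    have h0 := norm_nonneg (c k)
    nlinarith
  nlinarith [sq_nonneg ‖x (σ k)‖, norm_nonneg (x (σ k))]

lemma wc_mem (x : HNZ) : Memℓp (fun k : ℕ × ℤ => c k * x (σ k)) 2 := by
  apply memℓp_gen
  simpa [Real.rpow_natCast] using wc_summable hσ hK0 hK x

/-- The weighted composition operator exists with norm bound `K`. -/
lemma exists_wc : ∃ T : HNZ →L[ℂ] HNZ, ‖T‖ ≤ K ∧
    ∀ (x : HNZ) (k : ℕ × ℤ), T x k = c k * x (σ k) := by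
  set L : HNZ →ₗ[ℂ] HNZ :=
    { toFun := fun x => ⟨fun k => c k * x (σ k), wc_mem hσ hK0 hK x⟩
      map_add' := fun x y => by
        ext k
        simp only [lp.coeFn_add, Pi.add_apply]
        exact mul_add _ _ _
      map_smul' := fun a x => by
        ext k
        simp only [lp.coeFn_smul, Pi.smul_apply, smul_eq_mul, RingHom.id_apply]
        ring } with hL
  have hbound : ∀ x : HNZ, ‖L x‖ ≤ K * ‖x‖ := by
    intro x
    have h2 : ‖L x‖ ^ 2 ≤ (K * ‖x‖) ^ 2 := by
      rw [norm_sq_eq, mul_pow, norm_sq_eq]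
      have hle : ∑' k, ‖(L x) k‖ ^ 2 ≤ ∑' k, K ^ 2 * ‖x (σ k)‖ ^ 2 := by
        refine Summable.tsum_le_tsum (fun k => ?_) (wc_summable hσ hK0 hK x)
          (((sq_summable x).comp_injective hσ).mul_left (K ^ 2))
        show ‖c k * x (σ k)‖ ^ 2 ≤ _
        have h1 : ‖c k * x (σ k)‖ ^ 2 = ‖c k‖ ^ 2 * ‖x (σ k)‖ ^ 2 := by
          rw [norm_mul]; ring
        rw [h1]
        have h3 : ‖c k‖ ^ 2 ≤ K ^ 2 := by
          have := hK k
          have h0 := norm_nonneg (c k)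
          nlinarith
        nlinarith [sq_nonneg ‖x (σ k)‖]
      refine hle.trans ?_
      rw [tsum_mul_left]
      refine mul_le_mul_of_nonneg_left ?_ (by positivity)
      exact Summable.tsum_le_tsum_of_inj σ hσ (fun m _ => by positivity) (fun k => le_rfl)
        ((sq_summable x).comp_injective hσ) (sq_summable x)
    exact (pow_le_pow_iff_left₀ (norm_nonneg _) (by positivity) two_ne_zero).mp h2
  refine ⟨L.mkContinuous K hbound, ?_, fun x k => rfl⟩
  exact L.mkContinuous_norm_le hK0 hbound

lemma wc_single {T : HNZ →L[ℂ] HNZ}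
    (hT : ∀ (x : HNZ) (k : ℕ × ℤ), T x k = c k * x (σ k)) (k : ℕ × ℤ) :
    T (lp.single 2 (σ k) 1) = c k • lp.single 2 k 1 := by
  ext m
  rw [hT, lp.coeFn_smul, Pi.smul_apply]
  by_cases hm : m = k
  · subst hm
    rw [lp.single_apply_self, lp.single_apply_self]
    simp
  · rw [lp.single_apply_ne _ _ _ (fun h => hm (hσ h)), lp.single_apply_ne _ _ _ hm]
    simp

lemma wc_single_zero {T : HNZ →L[ℂ] HNZ}
    (hT : ∀ (x : HNZ) (k : ℕ × ℤ), T x k = c k * x (σ k)) {p : ℕ × ℤ}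
    (hp : p ∉ Set.range σ) : T (lp.single 2 p 1) = 0 := by
  ext m
  rw [hT, lp.single_apply_ne _ _ _ (fun h => hp ⟨m, h⟩)]
  simp

end

lemma dNZ_sub_right (i : ℕ) (j : ℤ) :
    dNZ i (j - 1) - dNZ i j = if j = 0 then -(2 * (i : ℝ) + 1) else -1 := by
  unfold dNZ signZ
  by_cases h : j = 0
  · subst h
    norm_num
    ring
  · by_cases h0 : 0 ≤ j
    · have h1 : 0 ≤ j - 1 := by omega
      rw [if_pos h0, if_pos h1, if_neg h]
      push_cast; ring
    · have h1 : ¬ 0 ≤ j - 1 := by omega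
      rw [if_neg h0, if_neg h1, if_neg h]
      push_cast; ring

end Suq2Aux

open Suq2Aux in
theorem suq2_CP2_bounded_commutators (q : ℝ) (hq0 : 0 < q) (hq1 : q < 1)
    (α β : HNZ →L[ℂ] HNZ) (D : HNZ →ₗ[ℂ] HNZ)
    (hα0 : ∀ j : ℤ, α (eNZ 0 j) = 0)
    (hα : ∀ (i : ℕ) (j : ℤ),
      α (eNZ (i + 1) j) = ((Real.sqrt (1 - q ^ (2 * (i + 1))) : ℝ) : ℂ) • eNZ i j)
    (hβ : ∀ (i : ℕ) (j : ℤ), β (eNZ i j) = ((q ^ i : ℝ) : ℂ) • eNZ i (j - 1))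
    (hD : ∀ (i : ℕ) (j : ℤ), D (eNZ i j) = ((dNZ i j : ℝ) : ℂ) • eNZ i j) :
    (∃ Cα : HNZ →L[ℂ] HNZ, ‖Cα‖ ≤ 1 ∧
      ∀ (i : ℕ) (j : ℤ), Cα (eNZ i j) = D (α (eNZ i j)) - α (D (eNZ i j))) ∧
    BddAbove (Set.range fun i : ℕ => (2 * (i : ℝ) + 1) * q ^ i) ∧
    (∃ Cβ : HNZ →L[ℂ] HNZ, ‖Cβ‖ ≤ (⨆ i : ℕ, (2 * (i : ℝ) + 1) * q ^ i) ∧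
      ∀ (i : ℕ) (j : ℤ), Cβ (eNZ i j) = D (β (eNZ i j)) - β (D (eNZ i j))) := by
  have hq0' : (0 : ℝ) ≤ q := hq0.le
  have hbdd : BddAbove (Set.range fun i : ℕ => (2 * (i : ℝ) + 1) * q ^ i) := by
    have hs1 : Summable fun i : ℕ => (i : ℝ) ^ 1 * q ^ i :=
      summable_pow_mul_geometric_of_norm_lt_one 1 (by rwa [Real.norm_eq_abs, abs_of_pos hq0])
    have hs2 : Summable fun i : ℕ => q ^ i := summable_geometric_of_lt_one hq0' hq1
    have hs : Summable fun i : ℕ => (2 * (i : ℝ) + 1) * q ^ i := by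
      have := (hs1.mul_left 2).add hs2
      refine this.congr fun i => ?_
      ring
    exact hs.tendsto_atTop_zero.bddAbove_range
  set K := ⨆ i : ℕ, (2 * (i : ℝ) + 1) * q ^ i with hKdef
  have hleK : ∀ i : ℕ, (2 * (i : ℝ) + 1) * q ^ i ≤ K := fun i => le_ciSup hbdd i
  have hK1 : (1 : ℝ) ≤ K := by simpa using hleK 0
  refine ⟨?_, hbdd, ?_⟩
  · -- Cα
    set σ : ℕ × ℤ → ℕ × ℤ := fun k => (k.1 + 1, k.2) with hσdef
    have hσ : Function.Injective σ := by
      intro a b h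
      simp only [σ, Prod.mk.injEq] at h
      exact Prod.ext (by omega) h.2
    set c : ℕ × ℤ → ℂ :=
      fun k => ((-signZ k.2 * Real.sqrt (1 - q ^ (2 * (k.1 + 1))) : ℝ) : ℂ) with hcdef
    have hc : ∀ k, ‖c k‖ ≤ 1 := by
      intro k
      simp only [c, Complex.norm_real, Real.norm_eq_abs, abs_mul, abs_neg]
      have h1 : |signZ k.2| = 1 := by unfold signZ; split_ifs <;> norm_num
      rw [h1, one_mul, abs_of_nonneg (Real.sqrt_nonneg _)]
      calc Real.sqrt (1 - q ^ (2 * (k.1 + 1))) ≤ Real.sqrt 1 := by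
            apply Real.sqrt_le_sqrt
            have : 0 < q ^ (2 * (k.1 + 1)) := pow_pos hq0 _
            linarith
        _ = 1 := Real.sqrt_one
    obtain ⟨T, hTn, hT⟩ := exists_wc hσ (c := c) zero_le_one hc
    refine ⟨T, hTn, fun i j => ?_⟩
    match i with
    | 0 =>
      have h0 : (0, j) ∉ Set.range σ := by
        rintro ⟨k, hk⟩
        simp only [σ, Prod.mk.injEq] at hk
        omega
      have hz : T (eNZ 0 j) = 0 := wc_single_zero hσ zero_le_one hc hT h0
      rw [hz, hα0, hD, map_zero, map_smul, hα0, smul_zero, sub_zero]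
    | i + 1 =>
      have hkey : T (eNZ (i + 1) j) = c (i, j) • eNZ i j := by
        have h := wc_single hσ zero_le_one hc hT (i, j)
        simpa [σ, eNZ] using h
      rw [hkey]
      simp only [hα, hD, map_smul]
      rw [smul_smul, smul_smul, ← sub_smul]
      congr 1
      have hrhs : ((Real.sqrt (1 - q ^ (2 * (i+1))) : ℝ) : ℂ) * ((dNZ i j : ℝ) : ℂ)
            - ((dNZ (i+1) j : ℝ) : ℂ) * ((Real.sqrt (1 - q ^ (2 * (i+1))) : ℝ) : ℂ)
          = (((dNZ i j - dNZ (i+1) j) * Real.sqrt (1 - q ^ (2 * (i+1))) : ℝ) : ℂ) := by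
        push_cast; ring
      rw [hrhs]
      simp only [c]
      exact congrArg Complex.ofReal (by unfold dNZ; push_cast; ring)
  · -- Cβ
    set σ : ℕ × ℤ → ℕ × ℤ := fun k => (k.1, k.2 + 1) with hσdef
    have hσ : Function.Injective σ := by
      intro a b h
      simp only [σ, Prod.mk.injEq] at h
      exact Prod.ext h.1 (by omega)
    set c : ℕ × ℤ → ℂ :=
      fun k => (((if k.2 = -1 then -(2 * (k.1 : ℝ) + 1) else -1) * q ^ k.1 : ℝ) : ℂ) with hcdef
    have hc : ∀ k, ‖c k‖ ≤ K := by
      intro k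
      simp only [c, Complex.norm_real, Real.norm_eq_abs, abs_mul]
      rw [abs_of_nonneg (pow_nonneg hq0' _)]
      refine le_trans ?_ (hleK k.1)
      have : |if k.2 = -1 then -(2 * (k.1 : ℝ) + 1) else -1| ≤ 2 * (k.1 : ℝ) + 1 := by
        split_ifs
        · rw [abs_neg, abs_of_nonneg (by positivity)]
        · rw [abs_neg, abs_one]
          have : (0:ℝ) ≤ (k.1 : ℝ) := Nat.cast_nonneg _
          linarith
      exact mul_le_mul_of_nonneg_right this (pow_nonneg hq0' _)
    obtain ⟨T, hTn, hT⟩ := exists_wc hσ (c := c) (zero_le_one.trans hK1) hc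
    refine ⟨T, hTn, fun i j => ?_⟩
    have hkey : T (eNZ i j) = c (i, j - 1) • eNZ i (j - 1) := by
      have h := wc_single hσ (zero_le_one.trans hK1) hc hT (i, j - 1)
      have hσk : σ (i, j - 1) = (i, j) := by simp only [σ]; congr 1; omega
      rw [hσk] at h
      simpa [eNZ] using h
    rw [hkey]
    simp only [hβ, hD, map_smul]
    rw [smul_smul, smul_smul, ← sub_smul]
    congr 1
    have hrhs : ((q ^ i : ℝ) : ℂ) * ((dNZ i (j-1) : ℝ) : ℂ)
          - ((dNZ i j : ℝ) : ℂ) * ((q ^ i : ℝ) : ℂ)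
        = (((dNZ i (j-1) - dNZ i j) * q ^ i : ℝ) : ℂ) := by
      push_cast; ring
    rw [hrhs, dNZ_sub_right]
    simp only [c]
    by_cases hj : j = 0
    · subst hj; norm_num
    · rw [if_neg hj, if_neg (show ¬ (j - 1 = -1) by omega)]

end
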